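/- Let u, v, x, y ∈ R^n with n ≥ 2 and λ := (u^T x)(y^T v) ≠ 0, and let M = X_{2n} N X_{2n}, where N has zero diagonal blocks and off-diagonal blocks v u^T (upper right) and x y^T (lower left). Then M^3 = λM, and the minimal polynomial of M is t^3 - λt. -/

import Mathlib

open Matrix BigOperators

def Jmat (n : ℕ) : Matrix (Fin n) (Fin n) ℝ :=
  Matrix.of fun i j => if j = i.rev then 1 else 0

noncomputable def Xmat (n : ℕ) : Matrix (Fin n ⊕ Fin n) (Fin n ⊕ Fin n) ℝ :=
  (Real.sqrt 2)⁻¹ • Matrix.fromBlocks 1 (Jmat n) (Jmat n) (-1)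

lemma Jmat_mul_Jmat (n : ℕ) : Jmat n * Jmat n = 1 := by
  ext i j
  rw [Matrix.mul_apply]
  rw [Finset.sum_eq_single i.rev]
  · simp [Jmat, Matrix.one_apply, Fin.rev_eq_iff, eq_comm]
  · intro b _ hb
    simp [Jmat, hb]
  · simp

lemma Xmat_mul_Xmat (n : ℕ) : Xmat n * Xmat n = 1 := by
  have h2 : (Real.sqrt 2)⁻¹ * (Real.sqrt 2)⁻¹ = 2⁻¹ := by
    rw [← mul_inv, Real.mul_self_sqrt (by norm_num : (0:ℝ) ≤ 2)]
  rw [Xmat, smul_mul_assoc, mul_smul_comm, smul_smul, h2,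
    Matrix.fromBlocks_multiply]
  simp only [Matrix.one_mul, Matrix.mul_one, Jmat_mul_Jmat, Matrix.mul_neg,
    Matrix.neg_mul, neg_neg, add_neg_cancel]
  ext i j
  cases i <;> cases j <;>
    simp [Matrix.one_apply, Matrix.fromBlocks] <;> split <;> norm_num

lemma vecMulVec_mul_vecMulVec (n : ℕ) (a b c d : Fin n → ℝ) :
    Matrix.vecMulVec a b * Matrix.vecMulVec c d = (b ⬝ᵥ c) • Matrix.vecMulVec a d := by
  ext i j
  simp only [Matrix.mul_apply, Matrix.vecMulVec_apply, Matrix.smul_apply,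
    dotProduct, smul_eq_mul, Finset.sum_mul, Finset.mul_sum]
  apply Finset.sum_congr rfl
  intro k _
  ring

theorem minimal_polynomial_rank_one_blocks (n : ℕ) (hn : 2 ≤ n)
    (u v x y : Fin n → ℝ) (lam : ℝ) (hlam : lam = (u ⬝ᵥ x) * (y ⬝ᵥ v)) (hne : lam ≠ 0)
    (M : Matrix (Fin n ⊕ Fin n) (Fin n ⊕ Fin n) ℝ)
    (hM : M = Xmat n *
        Matrix.fromBlocks 0 (Matrix.vecMulVec v u) (Matrix.vecMulVec x y) 0 * Xmat n) :
    M ^ 3 = lam • M ∧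
    minpoly ℝ M = Polynomial.X ^ 3 - Polynomial.C lam * Polynomial.X := by
  have hux : u ⬝ᵥ x ≠ 0 := fun h => hne (by rw [hlam, h, zero_mul])
  have hyv : y ⬝ᵥ v ≠ 0 := fun h => hne (by rw [hlam, h, mul_zero])
  obtain ⟨ju, hju⟩ : ∃ j, u j ≠ 0 := by
    by_contra h; push_neg at h
    exact hux (by simp [dotProduct, h])
  obtain ⟨jy, hjy⟩ : ∃ j, y j ≠ 0 := by
    by_contra h; push_neg at h
    exact hyv (by simp [dotProduct, h])
  obtain ⟨jv, hjv⟩ : ∃ j, v j ≠ 0 := by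
    by_contra h; push_neg at h
    exact hyv (by simp [dotProduct, h])
  set X := Xmat n with hX
  set P := Matrix.vecMulVec v u with hP
  set Q := Matrix.vecMulVec x y with hQ
  set N : Matrix (Fin n ⊕ Fin n) (Fin n ⊕ Fin n) ℝ := Matrix.fromBlocks 0 P Q 0 with hN
  have hXX : X * X = 1 := Xmat_mul_Xmat n
  have hconj : ∀ A B : Matrix (Fin n ⊕ Fin n) (Fin n ⊕ Fin n) ℝ,
      (X * A * X) * (X * B * X) = X * (A * B) * X := by
    intro A B
    calc (X * A * X) * (X * B * X) = X * A * (X * X) * (B * X) := by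
          simp only [Matrix.mul_assoc]
      _ = X * (A * B) * X := by rw [hXX]; simp only [Matrix.mul_assoc, Matrix.mul_one]
  have hinv : ∀ A : Matrix (Fin n ⊕ Fin n) (Fin n ⊕ Fin n) ℝ,
      X * (X * A * X) * X = A := by
    intro A
    have e : X * (X * A * X) * X = (X * X) * A * (X * X) := by
      simp only [Matrix.mul_assoc]
    rw [e, hXX, Matrix.one_mul, Matrix.mul_one]
  have hN2 : N * N = Matrix.fromBlocks (P * Q) 0 0 (Q * P) := by
    rw [hN, Matrix.fromBlocks_multiply]; simp
  have hPQ : P * Q = (u ⬝ᵥ x) • Matrix.vecMulVec v y := vecMulVec_mul_vecMulVec n v u x y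
  have hQP : Q * P = (y ⬝ᵥ v) • Matrix.vecMulVec x u := vecMulVec_mul_vecMulVec n x y v u
  have hPQP : P * Q * P = lam • P := by
    rw [hPQ, Matrix.smul_mul, hP, vecMulVec_mul_vecMulVec n v y v u, smul_smul, hlam]
  have hQPQ : Q * P * Q = lam • Q := by
    rw [hQP, Matrix.smul_mul, hQ, vecMulVec_mul_vecMulVec n x u x y, smul_smul, hlam,
      mul_comm]
  have hN3 : N * N * N = lam • N := by
    rw [hN2, hN, Matrix.fromBlocks_multiply]
    simp only [Matrix.zero_mul, Matrix.mul_zero, add_zero, zero_add]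
    rw [hPQP, hQPQ]
    simp [Matrix.fromBlocks_smul]
  have hM2 : M * M = X * (N * N) * X := by rw [hM, hconj]
  have hM3 : M ^ 3 = lam • M := by
    have e : M ^ 3 = M * M * M := by rw [pow_succ, pow_two]
    rw [e, hM2, hM, hconj, hN3, Matrix.mul_smul, Matrix.smul_mul]
  refine ⟨hM3, ?_⟩
  have hind : ∀ a b c : ℝ, c • (1 : Matrix (Fin n ⊕ Fin n) (Fin n ⊕ Fin n) ℝ)
      + b • M + a • (M * M) = 0 → a = 0 ∧ b = 0 ∧ c = 0 := by
    intro a b c h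
    have hNrel : c • (1 : Matrix (Fin n ⊕ Fin n) (Fin n ⊕ Fin n) ℝ)
        + b • N + a • (N * N) = 0 := by
      have h1 : X * (c • (1 : Matrix (Fin n ⊕ Fin n) (Fin n ⊕ Fin n) ℝ)
          + b • M + a • (M * M)) * X = c • 1 + b • N + a • (N * N) := by
        rw [hM2, hM]
        simp only [Matrix.mul_add, Matrix.add_mul, Matrix.mul_smul, Matrix.smul_mul, hinv]
        rw [Matrix.mul_one, hXX]
      rw [h, Matrix.mul_zero, Matrix.zero_mul] at h1
      exact h1.symm
    have hb : b = 0 := by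
      have h2 := congrFun (congrFun hNrel (Sum.inl jv)) (Sum.inr ju)
      rw [hN2] at h2
      simp [hN, hN2, hP, Matrix.vecMulVec_apply, Matrix.one_apply] at h2
      rcases h2 with h' | h' | h'
      exacts [h', absurd h' hjv, absurd h' hju]
    rw [hb, zero_smul, add_zero] at hNrel
    have key : ∀ i j : Fin n, a * (u ⬝ᵥ x) * v i * y j + (if i = j then c else 0) = 0 := by
      intro i j
      have h2 := congrFun (congrFun hNrel (Sum.inl i)) (Sum.inl j)
      simp only [hN2, Matrix.add_apply, Matrix.smul_apply, Matrix.one_apply,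
        Matrix.fromBlocks_apply₁₁, hPQ, Matrix.vecMulVec_apply, smul_eq_mul,
        Sum.inl.injEq, Matrix.zero_apply] at h2
      by_cases hij : i = j <;> simp only [hij, if_true, if_pos, if_neg, not_false_iff] at h2 ⊢ <;>
        linear_combination h2
    have i0 : Fin n := ⟨0, by omega⟩
    have j0 : Fin n := ⟨1, by omega⟩
    have hij : (⟨0, by omega⟩ : Fin n) ≠ ⟨1, by omega⟩ := by simp [Fin.ext_iff]
    have hc : c = 0 := by
      have hij' := key ⟨0, by omega⟩ ⟨1, by omega⟩
      rw [if_neg hij, add_zero] at hij'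
      rcases mul_eq_zero.mp hij' with h' | h'
      · have h0 := key ⟨0, by omega⟩ ⟨0, by omega⟩
        rw [if_pos rfl, h', zero_mul, zero_add] at h0
        exact h0
      · have h0 := key ⟨1, by omega⟩ ⟨1, by omega⟩
        rw [if_pos rfl, h', mul_zero, zero_add] at h0
        exact h0
    have ha : a = 0 := by
      have h0 := key jv jy
      rw [hc, ite_self, add_zero] at h0
      rcases mul_eq_zero.mp h0 with h' | h'
      · rcases mul_eq_zero.mp h' with h'' | h''
        · rcases mul_eq_zero.mp h'' with h3 | h3
          · exact h3
          · exact absurd h3 hux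
        · exact absurd h'' hjv
      · exact absurd h' hjy
    exact ⟨ha, hb, hc⟩
  have hmono : (Polynomial.X ^ 3 - Polynomial.C lam * Polynomial.X : Polynomial ℝ).Monic := by
    apply Polynomial.monic_X_pow_sub
    exact lt_of_le_of_lt (Polynomial.degree_C_mul_X_le lam) (by norm_num)
  have hdeg : (Polynomial.X ^ 3 - Polynomial.C lam * Polynomial.X : Polynomial ℝ).degree = 3 := by
    rw [Polynomial.degree_sub_eq_left_of_degree_lt
      (by rw [Polynomial.degree_X_pow]
          exact lt_of_le_of_lt (Polynomial.degree_C_mul_X_le lam) (by norm_num)),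
      Polynomial.degree_X_pow]
    norm_num
  have haev : Polynomial.aeval M (Polynomial.X ^ 3 - Polynomial.C lam * Polynomial.X) = 0 := by
    rw [map_sub, _root_.map_mul, Polynomial.aeval_X_pow, Polynomial.aeval_C,
      Polynomial.aeval_X, hM3, Algebra.smul_def, sub_self]
  refine (minpoly.unique _ _ hmono haev ?_).symm
  intro q hq hq0
  rw [hdeg]
  by_contra hlt
  push_neg at hlt
  have hqne : q ≠ 0 := hq.ne_zero
  have hnd : q.natDegree < 3 := by
    rw [Polynomial.natDegree_lt_iff_degree_lt hqne]
    exact_mod_cast hlt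
  have hsum : (Polynomial.aeval M) q = ∑ i ∈ Finset.range 3, q.coeff i • M ^ i :=
    Polynomial.aeval_eq_sum_range' hnd M
  rw [hq0] at hsum
  have hrel : q.coeff 0 • (1 : Matrix (Fin n ⊕ Fin n) (Fin n ⊕ Fin n) ℝ)
      + q.coeff 1 • M + q.coeff 2 • (M * M) = 0 := by
    rw [Finset.sum_range_succ, Finset.sum_range_succ, Finset.sum_range_one] at hsum
    simpa [pow_zero, pow_one, pow_two] using hsum.symm
  obtain ⟨ha, hb, hc⟩ := hind (q.coeff 2) (q.coeff 1) (q.coeff 0) hrel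
  have h1 : q.coeff q.natDegree = 1 := hq.coeff_natDegree
  have h0 : q.natDegree = 0 ∨ q.natDegree = 1 ∨ q.natDegree = 2 := by omega
  rcases h0 with h | h | h
  · rw [h, hc] at h1; exact zero_ne_one h1
  · rw [h, hb] at h1; exact zero_ne_one h1
  · rw [h, ha] at h1; exact zero_ne_one h1
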